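/- Let K_T be a symmetric positive definite n_u × n_u matrix, C an n_u × n_c matrix of full column rank, and R ∈ R^{n_u}. Suppose δU_K ∈ Ker(Cᵀ K_T) solves the projected correction problem and is nonzero. Then the augmented matrix C' = (C | δU_K/‖δU_K‖) has full column rank n_c + 1, and the augmented reduced operator C'ᵀ K_T C' is symmetric positive definite with block structure [[Cᵀ K_T C, 0],[0, δU_Kᵀ K_T δU_K / ‖δU_K‖²]]. -/

import Mathlib

open Matrix

/-- On-the-fly global enrichment of the reduced basis: adding a normalized nonzero
`K_T`-orthogonal correction vector to the full-column-rank basis `C` yields a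
full-column-rank augmented basis, and the augmented reduced operator is SPD with a
block-diagonal structure. -/
theorem reduced_basis_enrichment {nu nc : ℕ}
    (KT : Matrix (Fin nu) (Fin nu) ℝ) (C : Matrix (Fin nu) (Fin nc) ℝ)
    (hKT : KT.PosDef)
    (hC : ∀ x : Fin nc → ℝ, C *ᵥ x = 0 → x = 0)
    (dUK : Fin nu → ℝ) (hne : dUK ≠ 0)
    (hker : (Cᵀ * KT) *ᵥ dUK = 0) :
    let w : Fin nu → ℝ := (Real.sqrt (dUK ⬝ᵥ dUK))⁻¹ • dUK
    let C' : Matrix (Fin nu) (Fin nc ⊕ Fin 1) ℝ := Matrix.fromCols C (Matrix.replicateCol (Fin 1) w)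
    (∀ x : Fin nc ⊕ Fin 1 → ℝ, C' *ᵥ x = 0 → x = 0) ∧
      (C'ᵀ * KT * C').PosDef ∧
      C'ᵀ * KT * C' =
        Matrix.fromBlocks (Cᵀ * KT * C) 0 0
          (Matrix.of fun _ _ : Fin 1 => (dUK ⬝ᵥ (KT *ᵥ dUK)) / (dUK ⬝ᵥ dUK)) := by
  intro w C'
  have hKTt : KTᵀ = KT := hKT.1
  have hs0 : 0 ≤ dUK ⬝ᵥ dUK := Finset.sum_nonneg fun i _ => mul_self_nonneg _
  have hs : 0 < dUK ⬝ᵥ dUK := hs0.lt_of_ne (Ne.symm (mt dotProduct_self_eq_zero.mp hne))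
  have hsqrt : 0 < Real.sqrt (dUK ⬝ᵥ dUK) := Real.sqrt_pos.2 hs
  have hwne : w ≠ 0 := smul_ne_zero (inv_ne_zero hsqrt.ne') hne
  -- key orthogonality facts
  have hkw : (Cᵀ * KT) *ᵥ w = 0 := by
    show (Cᵀ * KT) *ᵥ ((Real.sqrt (dUK ⬝ᵥ dUK))⁻¹ • dUK) = 0
    rw [mulVec_smul, hker, smul_zero]
  -- injectivity of the augmented basis
  have hinj : ∀ x : Fin nc ⊕ Fin 1 → ℝ, C' *ᵥ x = 0 → x = 0 := by
    intro x hx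
    have hxelim : x = Sum.elim (x ∘ Sum.inl) (x ∘ Sum.inr) := by
      funext i; cases i <;> rfl
    have hcol : Matrix.replicateCol (Fin 1) w *ᵥ (x ∘ Sum.inr) = (x (Sum.inr 0)) • w := by
      ext i
      simp [Matrix.replicateCol, Matrix.mulVec, dotProduct, mul_comm]
    have hx' : C *ᵥ (x ∘ Sum.inl) + (x (Sum.inr 0)) • w = 0 := by
      rw [← hcol]
      rw [hxelim] at hx
      rwa [fromCols_mulVec_sumElim] at hx
    have h3 : (Cᵀ * KT * C) *ᵥ (x ∘ Sum.inl) = 0 := by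
      have := congrArg (fun v => (Cᵀ * KT) *ᵥ v) hx'
      simpa [Matrix.mulVec_add, Matrix.mulVec_smul, hkw, Matrix.mulVec_mulVec,
        Matrix.mul_assoc] using this
    have h4 : (C *ᵥ (x ∘ Sum.inl)) ⬝ᵥ (KT *ᵥ (C *ᵥ (x ∘ Sum.inl))) = 0 := by
      have := congrArg (fun v => (x ∘ Sum.inl) ⬝ᵥ v) h3
      simpa [← Matrix.mulVec_mulVec, Matrix.dotProduct_mulVec,
        Matrix.vecMul_transpose] using this
    have h5 : C *ᵥ (x ∘ Sum.inl) = 0 := by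
      by_contra h
      have := hKT.dotProduct_mulVec_pos h
      simp only [star_trivial] at this
      exact this.ne' h4
    have h6 : x ∘ Sum.inl = 0 := hC _ h5
    have h7 : x (Sum.inr 0) = 0 := by
      have : (x (Sum.inr 0)) • w = 0 := by rwa [h5, zero_add] at hx'
      rcases smul_eq_zero.mp this with h | h
      · exact h
      · exact absurd h hwne
    funext i
    cases i with
    | inl j => exact congrFun h6 j
    | inr j => rw [Subsingleton.elim j 0]; exact h7
  refine ⟨hinj, ?_, ?_⟩
  · refine Matrix.PosDef.of_dotProduct_mulVec_pos ?_ ?_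
    · show (C'ᵀ * KT * C')ᴴ = _
      rw [Matrix.conjTranspose_eq_transpose_of_trivial]
      simp [Matrix.transpose_mul, hKTt, Matrix.mul_assoc]
    · intro x hx
      have hne' : C' *ᵥ x ≠ 0 := fun h => hx (hinj x h)
      have := hKT.dotProduct_mulVec_pos hne'
      simp only [star_trivial] at this ⊢
      calc 0 < (C' *ᵥ x) ⬝ᵥ (KT *ᵥ (C' *ᵥ x)) := this
        _ = x ⬝ᵥ ((C'ᵀ * KT * C') *ᵥ x) := by
            simp [← Matrix.mulVec_mulVec, Matrix.dotProduct_mulVec, Matrix.vecMul_transpose]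
  · -- block structure
    have hTR : Cᵀ * KT * Matrix.replicateCol (Fin 1) w = 0 := by
      rw [← Matrix.replicateCol_mulVec, hkw]
      ext i j
      simp [Matrix.replicateCol]
    have hvm : w ᵥ* (KT * C) = 0 := by
      rw [← Matrix.mulVec_transpose, Matrix.transpose_mul, hKTt, hkw]
    have hBL : (Matrix.replicateCol (Fin 1) w)ᵀ * KT * C = 0 := by
      rw [Matrix.transpose_replicateCol, Matrix.mul_assoc, ← Matrix.replicateRow_vecMul, hvm]
      ext i j
      simp [Matrix.replicateRow]
    have hscal : w ⬝ᵥ (KT *ᵥ w) = (dUK ⬝ᵥ (KT *ᵥ dUK)) / (dUK ⬝ᵥ dUK) := by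
      show ((Real.sqrt (dUK ⬝ᵥ dUK))⁻¹ • dUK) ⬝ᵥ
        (KT *ᵥ ((Real.sqrt (dUK ⬝ᵥ dUK))⁻¹ • dUK)) = _
      rw [Matrix.mulVec_smul, smul_dotProduct, dotProduct_smul, smul_eq_mul, smul_eq_mul,
        ← mul_assoc, ← mul_inv, Real.mul_self_sqrt hs0, inv_mul_eq_div]
    have hBR : (Matrix.replicateCol (Fin 1) w)ᵀ * KT * Matrix.replicateCol (Fin 1) w =
        Matrix.of fun _ _ : Fin 1 => (dUK ⬝ᵥ (KT *ᵥ dUK)) / (dUK ⬝ᵥ dUK) := by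
      rw [Matrix.transpose_replicateCol, Matrix.mul_assoc, ← Matrix.replicateCol_mulVec, Matrix.replicateRow_mul_replicateCol]
      ext i j
      simp [hscal]
    show (fromCols C (Matrix.replicateCol (Fin 1) w))ᵀ * KT * fromCols C (Matrix.replicateCol (Fin 1) w) = _
    rw [transpose_fromCols, fromRows_mul, fromRows_mul_fromCols, hTR, hBL, hBR]
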